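/- Let m, n be positive integers with m ≤ n and set d = ⌊n/m⌋. For any group G, the wreath product (G ≀ Sym(Fin d)) ≀ Sym(Fin m) embeds into G ≀ Sym(Fin (m·d)), and hence Mat_m((G ≀ Sym(Fin d))⁰) has unit group embedding into the unit group of Matₙ(G⁰). -/

import Mathlib

/-- A generalized rook matrix of order `n` over the group with zero `G⁰`:
an `n × n` matrix over `G ∪ {0}` with at most one nonzero entry in each row
and each column.  We record, for each column `j`, the (optional) pair
`(entry, row)` of its unique nonzero entry; the field `inj` states that
distinct columns use distinct rows. -/
structure Rook (n : ℕ) (G : Type*) [Group G] : Type _ where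
  col : Fin n → Option (G × Fin n)
  inj : ∀ ⦃j k : Fin n⦄ ⦃p q : G × Fin n⦄,
      col j = some p → col k = some q → p.2 = q.2 → j = k

namespace Rook

variable {n : ℕ} {G : Type*} [Group G]

theorem ext' {x y : Rook n G} (h : x.col = y.col) : x = y := by
  cases x; cases y; cases h; rfl

/-- Matrix multiplication of generalized rook matrices. -/
instance : Mul (Rook n G) where
  mul x y :=
  { col := fun j => (y.col j).bind fun p => (x.col p.2).map fun q => (q.1 * p.1, q.2)
    inj := by
      intro j k p q hp hq hpq
      simp only [Option.bind_eq_some_iff, Option.map_eq_some_iff] at hp hq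
      obtain ⟨pj, hyj, qj, hxj, rfl⟩ := hp
      obtain ⟨pk, hyk, qk, hxk, rfl⟩ := hq
      exact y.inj hyj hyk (x.inj hxj hxk hpq) }

theorem mul_col (x y : Rook n G) (j : Fin n) :
    (x * y).col j = (y.col j).bind fun p => (x.col p.2).map fun q => (q.1 * p.1, q.2) :=
  rfl

/-- The identity matrix. -/
instance : One (Rook n G) where
  one :=
  { col := fun j => some (1, j)
    inj := by
      intro j k p q hp hq hpq
      simp only [Option.some.injEq] at hp hq
      subst hp; subst hq; exact hpq }

theorem one_col (j : Fin n) : (1 : Rook n G).col j = some (1, j) := rfl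

/-- The zero matrix. -/
instance : Zero (Rook n G) where
  zero :=
  { col := fun _ => none
    inj := fun _ _ _ _ hp _ _ => nomatch hp }

instance : Monoid (Rook n G) where
  mul_assoc x y z := by
    refine ext' (funext fun j => ?_)
    simp only [mul_col]
    rcases hz : z.col j with _ | p
    · simp
    rcases hy : y.col p.2 with _ | p'
    · simp [hy]
    rcases hx : x.col p'.2 with _ | p''
    · simp [hy, hx]
    simp [hy, hx, mul_assoc]
  one_mul x := by
    refine ext' (funext fun j => ?_)
    simp only [mul_col]
    rcases hx : x.col j with _ | p <;> simp [one_col]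
  mul_one x := by
    refine ext' (funext fun j => ?_)
    simp only [mul_col, one_col]
    rcases hx : x.col j with _ | p <;> simp [hx]

open scoped Classical in
/-- The inverse of a generalized rook matrix (conjugate transpose pattern). -/
noncomputable instance : Inv (Rook n G) where
  inv x :=
  { col := fun i =>
      if h : ∃ jp : Fin n × (G × Fin n), x.col jp.1 = some jp.2 ∧ jp.2.2 = i
      then some ((h.choose.2.1)⁻¹, h.choose.1)
      else none
    inj := by
      intro i i' p q hp hq hpq
      split_ifs at hp hq with h h'
      obtain ⟨hcol, hrow⟩ := h.choose_spec
      obtain ⟨hcol', hrow'⟩ := h'.choose_spec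
      injection hp with hp'
      injection hq with hq'
      subst hp'; subst hq'
      have hj : h.choose.1 = h'.choose.1 := hpq
      rw [← hj, hcol] at hcol'
      have hpq2 : h.choose.2 = h'.choose.2 := Option.some.inj hcol'
      rw [← hrow, ← hrow', hpq2] }

end Rook

/-- The action of the symmetric group on `Fin n` on `Fin n → G` by permuting
coordinates, as a homomorphism into the automorphism group. -/
def permAction (G : Type*) [Group G] (n : ℕ) :
    Equiv.Perm (Fin n) →* MulAut (Fin n → G) where
  toFun σ :=
    { toFun := fun f => f ∘ σ.symm
      invFun := fun f => f ∘ σ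
      left_inv := fun f => by ext i; simp
      right_inv := fun f => by ext i; simp
      map_mul' := fun f g => rfl }
  map_one' := by
    ext f i
    simp [Equiv.Perm.one_def]
  map_mul' σ τ := by
    ext f i
    simp [Equiv.Perm.mul_def, Equiv.symm_trans_apply]

/-- The permutational wreath product `G ≀ Sym(Fin n)`: the semidirect product
of `Fin n → G` by `Equiv.Perm (Fin n)` acting by permuting coordinates. -/
abbrev Wreath (G : Type*) [Group G] (n : ℕ) :=
  SemidirectProduct (Fin n → G) (Equiv.Perm (Fin n)) (permAction G n)

namespace Stmt16Aux

variable {G : Type*} [Group G] {m d : ℕ}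

theorem permAction_apply (σ : Equiv.Perm (Fin d)) (f : Fin d → G) (j : Fin d) :
    permAction G d σ f j = f (σ.symm j) := rfl

/-- The block permutation on `Fin m × Fin d` associated to an element of the
iterated wreath product. -/
def pairPerm (x : Wreath (Wreath G d) m) : Equiv.Perm (Fin m × Fin d) where
  toFun p := (x.right p.1, (x.left (x.right p.1)).right p.2)
  invFun p := (x.right⁻¹ p.1, ((x.left p.1).right)⁻¹ p.2)
  left_inv p := by simp
  right_inv p := by simp

/-- The corresponding permutation of `Fin (m * d)`. -/
def bigPerm (x : Wreath (Wreath G d) m) : Equiv.Perm (Fin (m * d)) :=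
  finProdFinEquiv.permCongr (pairPerm x)

@[simp] theorem bigPerm_apply (x : Wreath (Wreath G d) m) (p : Fin m × Fin d) :
    bigPerm x (finProdFinEquiv p) =
      finProdFinEquiv (x.right p.1, (x.left (x.right p.1)).right p.2) := by
  simp [bigPerm, pairPerm]

@[simp] theorem bigPerm_symm_apply (x : Wreath (Wreath G d) m) (p : Fin m × Fin d) :
    (bigPerm x).symm (finProdFinEquiv p) =
      finProdFinEquiv (x.right⁻¹ p.1, ((x.left p.1).right)⁻¹ p.2) := by
  rw [Equiv.symm_apply_eq]
  simp [bigPerm, pairPerm, Equiv.Perm.inv_def]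

@[simp] theorem divNat_finProdFinEquiv (p : Fin m × Fin d) :
    (finProdFinEquiv p).divNat = p.1 := by
  have h := finProdFinEquiv.symm_apply_apply p
  rw [finProdFinEquiv_symm_apply] at h
  exact congrArg Prod.fst h

@[simp] theorem modNat_finProdFinEquiv (p : Fin m × Fin d) :
    (finProdFinEquiv p).modNat = p.2 := by
  have h := finProdFinEquiv.symm_apply_apply p
  rw [finProdFinEquiv_symm_apply] at h
  exact congrArg Prod.snd h

theorem pairPerm_mul (x y : Wreath (Wreath G d) m) :
    pairPerm (x * y) = pairPerm x * pairPerm y := by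
  ext p : 2
  · simp [pairPerm, SemidirectProduct.mul_right]
  · simp [pairPerm, SemidirectProduct.mul_left, SemidirectProduct.mul_right,
      permAction_apply, Equiv.Perm.inv_def]

/-- The embedding `(G ≀ Sym(Fin d)) ≀ Sym(Fin m) →* G ≀ Sym(Fin (m*d))`. -/
def wrEmbed : Wreath (Wreath G d) m →* Wreath G (m * d) where
  toFun x :=
    ⟨fun k => (x.left (finProdFinEquiv.symm k).1).left (finProdFinEquiv.symm k).2, bigPerm x⟩
  map_one' := by
    refine SemidirectProduct.ext ?_ ?_
    · funext k
      simp [SemidirectProduct.one_left]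
    · refine Equiv.ext fun k => ?_
      obtain ⟨p, rfl⟩ := finProdFinEquiv.surjective k
      simp [SemidirectProduct.one_left, SemidirectProduct.one_right]
  map_mul' x y := by
    refine SemidirectProduct.ext ?_ ?_
    · funext k
      obtain ⟨p, rfl⟩ := finProdFinEquiv.surjective k
      simp [SemidirectProduct.mul_left, SemidirectProduct.mul_right, permAction_apply,
        Equiv.Perm.inv_def]
    · refine Equiv.ext fun k => ?_
      obtain ⟨p, rfl⟩ := finProdFinEquiv.surjective k
      simp [SemidirectProduct.mul_left, SemidirectProduct.mul_right, Equiv.Perm.mul_apply,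
        permAction_apply, Equiv.Perm.inv_def]

theorem wrEmbed_injective (hd : 0 < d) :
    Function.Injective (wrEmbed : Wreath (Wreath G d) m →* Wreath G (m * d)) := by
  rw [injective_iff_map_eq_one]
  intro x hx
  have hleft : ∀ k, (x.left (finProdFinEquiv.symm k).1).left (finProdFinEquiv.symm k).2 = 1 :=
    fun k => congrFun (congrArg SemidirectProduct.left hx) k
  have hright : bigPerm x = 1 := congrArg SemidirectProduct.right hx
  have hσ : x.right = 1 := by
    refine Equiv.ext fun i => ?_
    have h := congrArg (fun (e : Equiv.Perm (Fin (m * d))) => e (finProdFinEquiv (i, ⟨0, hd⟩)))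
      hright
    simp only [bigPerm_apply, Equiv.Perm.one_apply] at h
    have := congrArg Prod.fst (finProdFinEquiv.injective h)
    simpa using this
  refine SemidirectProduct.ext ?_ hσ
  funext i
  refine SemidirectProduct.ext ?_ ?_
  · funext j
    have h := hleft (finProdFinEquiv (i, j))
    simpa using h
  · refine Equiv.ext fun j => ?_
    have h := congrArg (fun (e : Equiv.Perm (Fin (m * d))) => e (finProdFinEquiv (i, j))) hright
    simp only [bigPerm_apply, Equiv.Perm.one_apply] at h
    rw [hσ] at h
    have := congrArg Prod.snd (finProdFinEquiv.injective h)
    simpa using this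

section Rk

variable {n : ℕ}

/-- Column function of the block-diagonal rook matrix over `G` built from a
rook matrix over the wreath product, padded with the identity. -/
def rookMapCol (hle : m * d ≤ n) (x : Rook m (Wreath G d)) (k : Fin n) :
    Option (G × Fin n) :=
  if h : (k : ℕ) < m * d then
    (x.col (finProdFinEquiv.symm ⟨(k : ℕ), h⟩).1).map fun q =>
      (q.1.left (q.1.right (finProdFinEquiv.symm ⟨(k : ℕ), h⟩).2),
       Fin.castLE hle (finProdFinEquiv (q.2, q.1.right (finProdFinEquiv.symm ⟨(k : ℕ), h⟩).2)))
  else some (1, k)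

theorem rookMapCol_block (hle : m * d ≤ n) (x : Rook m (Wreath G d)) (p : Fin m × Fin d) :
    rookMapCol hle x (Fin.castLE hle (finProdFinEquiv p)) =
      (x.col p.1).map fun q =>
        (q.1.left (q.1.right p.2),
         Fin.castLE hle (finProdFinEquiv (q.2, q.1.right p.2))) := by
  have h : ((Fin.castLE hle (finProdFinEquiv p) : Fin n) : ℕ) < m * d := (finProdFinEquiv p).isLt
  rw [rookMapCol, dif_pos h]
  have e : (⟨((Fin.castLE hle (finProdFinEquiv p) : Fin n) : ℕ), h⟩ : Fin (m * d)) =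
      finProdFinEquiv p := by
    apply Fin.ext; simp
  rw [e, Equiv.symm_apply_apply]

theorem rookMapCol_pad (hle : m * d ≤ n) (k : Fin n)
    (h : ¬ (k : ℕ) < m * d) (x : Rook m (Wreath G d)) :
    rookMapCol hle x k = some (1, k) := by
  rw [rookMapCol, dif_neg h]

theorem exists_block (hle : m * d ≤ n) (k : Fin n) (h : (k : ℕ) < m * d) :
    ∃ p : Fin m × Fin d, k = Fin.castLE hle (finProdFinEquiv p) := by
  refine ⟨finProdFinEquiv.symm ⟨(k : ℕ), h⟩, ?_⟩
  apply Fin.ext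
  simp [Fin.divNat, Fin.modNat]
  exact (Nat.mod_add_div _ _).symm

theorem block_lt (hle : m * d ≤ n) (p : Fin m × Fin d) :
    ((Fin.castLE hle (finProdFinEquiv p) : Fin n) : ℕ) < m * d := (finProdFinEquiv p).isLt

/-- The monoid homomorphism `Mat_m((G ≀ Sym(Fin d))⁰) →* Matₙ(G⁰)`. -/
def rookMap (hle : m * d ≤ n) : Rook m (Wreath G d) →* Rook n G where
  toFun x :=
  { col := rookMapCol hle x
    inj := by
      intro j k p q hp hq hpq
      by_cases hj : (j : ℕ) < m * d
      · obtain ⟨pj, rfl⟩ := exists_block hle j hj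
        rw [rookMapCol_block] at hp
        rw [Option.map_eq_some_iff] at hp
        obtain ⟨qj, hxj, rfl⟩ := hp
        by_cases hk : (k : ℕ) < m * d
        · obtain ⟨pk, rfl⟩ := exists_block hle k hk
          rw [rookMapCol_block] at hq
          rw [Option.map_eq_some_iff] at hq
          obtain ⟨qk, hxk, rfl⟩ := hq
          have hpq' : (qj.2, qj.1.right pj.2) = (qk.2, qk.1.right pk.2) :=
            finProdFinEquiv.injective (Fin.ext (by simpa using congrArg Fin.val hpq))
          have h1 : qj.2 = qk.2 := congrArg Prod.fst hpq'
          have hcol : pj.1 = pk.1 := x.inj hxj hxk h1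
          rw [hcol, hxk] at hxj
          have hq' : qk = qj := Option.some.inj hxj
          have h2 : qj.1.right pj.2 = qk.1.right pk.2 := congrArg Prod.snd hpq'
          rw [hq'] at h2
          have h3 : pj.2 = pk.2 := qj.1.right.injective h2
          have : pj = pk := Prod.ext hcol h3
          rw [this]
        · rw [rookMapCol_pad hle k hk] at hq
          have hq' : q = (1, k) := (Option.some.inj hq).symm
          exfalso
          apply hk
          have : (q.2 : ℕ) < m * d := by
            rw [← hpq]
            exact block_lt hle _
          rw [hq'] at this
          exact this
      · rw [rookMapCol_pad hle j hj] at hp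
        have hp' : p = (1, j) := (Option.some.inj hp).symm
        by_cases hk : (k : ℕ) < m * d
        · obtain ⟨pk, rfl⟩ := exists_block hle k hk
          rw [rookMapCol_block] at hq
          rw [Option.map_eq_some_iff] at hq
          obtain ⟨qk, hxk, rfl⟩ := hq
          exfalso
          apply hj
          have : (p.2 : ℕ) < m * d := by
            rw [hpq]
            exact block_lt hle _
          rw [hp'] at this
          exact this
        · rw [rookMapCol_pad hle k hk] at hq
          have hq' : q = (1, k) := (Option.some.inj hq).symm
          rw [hp', hq'] at hpq
          exact hpq }
  map_one' := by
    refine Rook.ext' (funext fun k => ?_)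
    by_cases h : (k : ℕ) < m * d
    · obtain ⟨p, rfl⟩ := exists_block hle k h
      simp [rookMapCol_block, Rook.one_col, SemidirectProduct.one_left,
        SemidirectProduct.one_right]
    · simp [rookMapCol_pad hle k h, Rook.one_col]
  map_mul' x y := by
    refine Rook.ext' (funext fun k => ?_)
    by_cases h : (k : ℕ) < m * d
    · obtain ⟨p, rfl⟩ := exists_block hle k h
      rcases hy : y.col p.1 with _ | py
      · simp [Rook.mul_col, rookMapCol_block, hy]
      rcases hx : x.col py.2 with _ | px
      · simp [Rook.mul_col, rookMapCol_block, hy, hx]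
      · simp [Rook.mul_col, rookMapCol_block, hy, hx,
          SemidirectProduct.mul_left, SemidirectProduct.mul_right, permAction_apply,
          Equiv.Perm.inv_def, Equiv.Perm.mul_apply]
    · simp [Rook.mul_col, rookMapCol_pad hle k h]

theorem rookMap_injective (hd : 0 < d) (hle : m * d ≤ n) :
    Function.Injective (rookMap (G := G) hle) := by
  intro x y h
  have hc : ∀ k, rookMapCol hle x k = rookMapCol hle y k :=
    fun k => congrFun (congrArg Rook.col h) k
  refine Rook.ext' (funext fun j => ?_)
  have key : ∀ b : Fin d, rookMapCol hle x (Fin.castLE hle (finProdFinEquiv (j, b))) =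
      rookMapCol hle y (Fin.castLE hle (finProdFinEquiv (j, b))) := fun b => hc _
  simp only [rookMapCol_block] at key
  rcases hx : x.col j with _ | px <;> rcases hy : y.col j with _ | py
  · rfl
  · have := key ⟨0, hd⟩; rw [hx, hy] at this; simp at this
  · have := key ⟨0, hd⟩; rw [hx, hy] at this; simp at this
  · have hb : ∀ b : Fin d,
        (px.1.left (px.1.right b), Fin.castLE hle (finProdFinEquiv (px.2, px.1.right b))) =
        (py.1.left (py.1.right b), Fin.castLE hle (finProdFinEquiv (py.2, py.1.right b))) := by
      intro b
      have := key b
      rw [hx, hy, Option.map_some, Option.map_some] at this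
      exact Option.some.inj this
    have hrow : ∀ b : Fin d, (px.2, px.1.right b) = (py.2, py.1.right b) := by
      intro b
      exact finProdFinEquiv.injective
        (Fin.ext (by simpa using congrArg Fin.val (congrArg Prod.snd (hb b))))
    have hi : px.2 = py.2 := congrArg Prod.fst (hrow ⟨0, hd⟩)
    have hperm : px.1.right = py.1.right := by
      refine Equiv.ext fun b => ?_
      exact congrArg Prod.snd (hrow b)
    have hfun : px.1.left = py.1.left := by
      funext c
      have := congrArg Prod.fst (hb (px.1.right.symm c))
      simpa [Equiv.apply_symm_apply, hperm] using this
    have : px = py := by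
      refine Prod.ext ?_ hi
      exact SemidirectProduct.ext hfun hperm
    rw [this]

end Rk

end Stmt16Aux

/-- For `0 < m ≤ n` and `d = ⌊n/m⌋`, the wreath product
`(G ≀ Sym(Fin d)) ≀ Sym(Fin m)` embeds into `G ≀ Sym(Fin (m·d))`, and hence
the unit group of `Mat_m((G ≀ Sym(Fin d))⁰)` embeds into the unit group of
`Matₙ(G⁰)`. -/
theorem stmt16 (m n : ℕ) (hm : 0 < m) (hmn : m ≤ n) (G : Type*) [Group G] :
    (∃ f : Wreath (Wreath G (n / m)) m →* Wreath G (m * (n / m)),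
        Function.Injective f) ∧
    (∃ g : (Rook m (Wreath G (n / m)))ˣ →* (Rook n G)ˣ,
        Function.Injective g) := by
  have hd : 0 < n / m := (Nat.one_le_div_iff hm).mpr hmn
  have hle : m * (n / m) ≤ n := by
    rw [mul_comm]
    exact Nat.div_mul_le_self n m
  constructor
  · exact ⟨Stmt16Aux.wrEmbed, Stmt16Aux.wrEmbed_injective hd⟩
  · refine ⟨Units.map (Stmt16Aux.rookMap hle), fun u v huv => ?_⟩
    have h : (Stmt16Aux.rookMap hle) u.val = (Stmt16Aux.rookMap hle) v.val := by
      have := congrArg Units.val huv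
      simpa [Units.coe_map] using this
    exact Units.ext (Stmt16Aux.rookMap_injective hd hle h)
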